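/- Mean value bound for the difference of gradient differences of the ℓ_α norm: let α ∈ [2,∞), f(x) = ‖x‖_α on ℝ^m with m ≥ 1, and let a, b ∈ ℝ^m be such that the segment joining them avoids 0 and f is twice differentiable on a neighborhood of the segment. Then ‖∇f(a) − ∇f(b)‖₂ ≤ (α−1) · 1{m > 1} · ‖a − b‖₂ / min_{c∈[0,1]} ‖b + c(a−b)‖_α. -/

import Mathlib

open scoped BigOperators

/-- The ℓ_α norm on Euclidean space `ℝ^m`. -/
noncomputable def lpE (α : ℝ) {m : ℕ} (x : EuclideanSpace ℝ (Fin m)) : ℝ :=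
  (∑ i, |x i| ^ α) ^ (1 / α)


section helpers
open Real Filter Finset


lemma phi_hasDerivAt {α : ℝ} (hα : 2 ≤ α) (t : ℝ) :
    HasDerivAt (fun s : ℝ => s * |s| ^ (α - 2)) ((α - 1) * |t| ^ (α - 2)) t := by
  rcases lt_trichotomy t 0 with ht | ht | ht
  · have hev : (fun s : ℝ => -((-s) ^ (α - 1))) =ᶠ[nhds t] fun s => s * |s| ^ (α - 2) := by
      filter_upwards [Iio_mem_nhds ht] with s hs
      rw [Set.mem_Iio] at hs
      rw [abs_of_neg hs, show α - 1 = 1 + (α - 2) by ring, Real.rpow_add (by linarith),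
        Real.rpow_one]
      ring
    have h2 : HasDerivAt (fun s : ℝ => (-s) ^ (α - 1))
        ((α - 1) * (-t) ^ (α - 1 - 1) * (-1)) t :=
      (Real.hasDerivAt_rpow_const (Or.inl (by linarith))).comp t (hasDerivAt_neg t)
    have h1 : HasDerivAt (fun s : ℝ => -((-s) ^ (α - 1))) ((α - 1) * |t| ^ (α - 2)) t := by
      refine h2.neg.congr_deriv ?_
      rw [abs_of_neg ht]; ring_nf
    exact h1.congr_of_eventuallyEq hev.symm
  · subst ht
    rcases eq_or_lt_of_le hα with h2 | h2
    · have he : (fun s : ℝ => s * |s| ^ (α - 2)) = fun s : ℝ => s := by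
        funext s; rw [← h2]; simp
      rw [he, abs_zero, ← h2]
      norm_num
      exact hasDerivAt_id (0:ℝ)
    · rw [abs_zero, Real.zero_rpow (by linarith), mul_zero]
      rw [hasDerivAt_iff_tendsto_slope]
      have hs : ∀ s : ℝ, s ≠ 0 → slope (fun s : ℝ => s * |s| ^ (α - 2)) 0 s = |s| ^ (α - 2) := by
        intro s hs
        rw [slope_def_field]
        field_simp
        ring
      have hcont : ContinuousAt (fun s : ℝ => |s| ^ (α - 2)) 0 :=
        (Real.continuousAt_rpow_const (|(0:ℝ)|) (α - 2) (Or.inr (by linarith))).comp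
          continuous_abs.continuousAt
      have h3 : Tendsto (fun s : ℝ => |s| ^ (α - 2)) (nhdsWithin 0 (({0} : Set ℝ)ᶜ)) (nhds 0) := by
        have := hcont.tendsto
        rw [abs_zero, Real.zero_rpow (by linarith)] at this
        exact this.mono_left nhdsWithin_le_nhds
      exact h3.congr' (by filter_upwards [self_mem_nhdsWithin] with s hs2 using (hs s hs2).symm)
  · have hev : (fun s : ℝ => s ^ (α - 1)) =ᶠ[nhds t] fun s => s * |s| ^ (α - 2) := by
      filter_upwards [Ioi_mem_nhds ht] with s hs
      rw [abs_of_pos hs, show α - 1 = 1 + (α - 2) by ring, Real.rpow_add hs, Real.rpow_one]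
    have h1 : HasDerivAt (fun s : ℝ => s ^ (α - 1)) ((α - 1) * |t| ^ (α - 2)) t := by
      convert Real.hasDerivAt_rpow_const (p := α - 1) (Or.inl (ne_of_gt ht)) using 2
      rw [abs_of_pos ht]; ring_nf
    exact h1.congr_of_eventuallyEq hev.symm

lemma psi_hasDerivAt {α : ℝ} (hα : 2 ≤ α) (t : ℝ) :
    HasDerivAt (fun s : ℝ => |s| ^ α) (α * (t * |t| ^ (α - 2))) t := by
  rcases eq_or_ne t 0 with ht | ht
  · subst ht
    rw [abs_zero, zero_mul, mul_zero]
    rw [hasDerivAt_iff_tendsto_slope]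
    have hs : ∀ s : ℝ, s ≠ 0 → slope (fun s : ℝ => |s| ^ α) 0 s = s * |s| ^ (α - 2) := by
      intro s hs
      rw [slope_def_field, abs_zero, Real.zero_rpow (by positivity), show α = 2 + (α - 2) by ring,
        Real.rpow_add (abs_pos.2 hs)]
      rw [show |s| ^ (2:ℝ) = s * s by rw [Real.rpow_two, sq_abs]; ring]
      field_simp
      ring
    have h3 : Tendsto (fun s : ℝ => s * |s| ^ (α - 2)) (nhdsWithin 0 (({0} : Set ℝ)ᶜ)) (nhds 0) := by
      have hcont : ContinuousAt (fun s : ℝ => s * |s| ^ (α - 2)) 0 :=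
        continuousAt_id.mul ((Real.continuousAt_rpow_const (|(0:ℝ)|) (α - 2)
          (Or.inr (by linarith))).comp continuous_abs.continuousAt)
      have := hcont.tendsto
      rw [zero_mul] at this
      exact this.mono_left nhdsWithin_le_nhds
    exact h3.congr' (by filter_upwards [self_mem_nhdsWithin] with s hs2 using (hs s hs2).symm)
  · have h0 : HasDerivAt (fun s : ℝ => |s| ^ α) (α * |t| ^ (α - 1) * (if t < 0 then -1 else 1)) t := by
      have habs : HasDerivAt (fun s : ℝ => |s|) (if t < 0 then -1 else 1) t := by
        rcases lt_or_gt_of_ne ht with h | h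
        · simp only [if_pos h]
          exact (hasDerivAt_neg t).congr_of_eventuallyEq
            (by filter_upwards [Iio_mem_nhds h] with s hs using (abs_of_neg hs))
        · simp only [if_neg (not_lt.2 h.le)]
          exact (hasDerivAt_id t).congr_of_eventuallyEq
            (by filter_upwards [Ioi_mem_nhds h] with s hs using (abs_of_pos hs))
      exact (Real.hasDerivAt_rpow_const (p := α) (Or.inl (abs_ne_zero.2 ht))).comp t habs
    convert h0 using 1
    rcases lt_or_gt_of_ne ht with h | h
    · rw [if_pos h, abs_of_neg h, show α - 1 = 1 + (α - 2) by ring,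
        Real.rpow_add (by linarith), Real.rpow_one]
      ring
    · rw [if_neg (not_lt.2 h.le), abs_of_pos h, show α - 1 = 1 + (α - 2) by ring,
        Real.rpow_add h, Real.rpow_one]
      ring


section algebra
variable {m : ℕ} (α : ℝ)

/-- The Hessian quadratic form (scaled). -/
noncomputable def Sform (x v w : Fin m → ℝ) : ℝ :=
  (∑ i, |x i| ^ (α - 2) * v i * w i) -
    (∑ i, (x i * |x i| ^ (α - 2)) * v i) * (∑ i, (x i * |x i| ^ (α - 2)) * w i) /
      (∑ i, |x i| ^ α)

variable {α}

lemma ksum_pos (hα : 2 ≤ α) {x : Fin m → ℝ} (hx : x ≠ 0) : 0 < ∑ i, |x i| ^ α := by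
  obtain ⟨i, hi⟩ : ∃ i, x i ≠ 0 := by
    by_contra h
    push_neg at h
    exact hx (funext h)
  refine Finset.sum_pos' (fun j _ => by positivity) ⟨i, Finset.mem_univ i, ?_⟩
  have : 0 < |x i| := abs_pos.2 hi
  positivity

lemma Sform_self_nonneg (hα : 2 ≤ α) {x : Fin m → ℝ} (hx : x ≠ 0) (u : Fin m → ℝ) :
    0 ≤ Sform α x u u := by
  have hk := ksum_pos hα hx
  rw [Sform, sub_nonneg, div_le_iff₀ hk]
  have key : (∑ i, (x i * |x i| ^ (α - 2)) * u i) ^ 2 ≤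
      (∑ i, |x i| ^ (α - 2) * u i * u i) * ∑ i, |x i| ^ α := by
    have CS := Finset.sum_mul_sq_le_sq_mul_sq Finset.univ
      (fun i => |x i| ^ (α / 2)) (fun i => x i * |x i| ^ (α / 2 - 2) * u i)
    have h1 : ∀ i, |x i| ^ (α / 2) * (x i * |x i| ^ (α / 2 - 2) * u i)
        = (x i * |x i| ^ (α - 2)) * u i := by
      intro i
      rcases eq_or_ne (x i) 0 with h | h
      · simp [h, Real.zero_rpow (by linarith : α / 2 ≠ 0)]
      · have habs : (0:ℝ) < |x i| := abs_pos.2 h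
        rw [show α - 2 = α / 2 + (α / 2 - 2) by ring, Real.rpow_add habs]
        ring
    have h2 : ∀ i, (|x i| ^ (α / 2)) ^ 2 = |x i| ^ α := by
      intro i
      rw [← Real.rpow_natCast (|x i| ^ (α / 2)) 2, ← Real.rpow_mul (abs_nonneg _)]
      norm_num
    have h3 : ∀ i, (x i * |x i| ^ (α / 2 - 2) * u i) ^ 2 ≤ |x i| ^ (α - 2) * u i * u i := by
      intro i
      rcases eq_or_ne (x i) 0 with h | h
      · simp only [h, zero_mul, abs_zero, zero_pow, ne_eq, OfNat.ofNat_ne_zero,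
          not_false_eq_true, mul_assoc]
        exact mul_nonneg (Real.rpow_nonneg le_rfl _) (mul_self_nonneg _)
      · have habs : (0:ℝ) < |x i| := abs_pos.2 h
        have e1 : (|x i| ^ (α/2-2)) ^ (2:ℕ) = |x i| ^ ((α/2-2) * 2) := by
          rw [← Real.rpow_natCast (|x i| ^ (α/2-2)) 2, ← Real.rpow_mul (abs_nonneg _)]
          norm_num
        have e2 : x i ^ (2:ℕ) = |x i| ^ ((2:ℝ)) := by
          rw [← sq_abs, ← Real.rpow_natCast (|x i|) 2]
          norm_num
        have : (x i * |x i| ^ (α / 2 - 2) * u i) ^ 2 = |x i| ^ (α - 2) * u i * u i := by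
          rw [mul_pow, mul_pow, e1, e2, ← Real.rpow_add habs,
            show (2:ℝ) + (α / 2 - 2) * 2 = α - 2 by ring, sq]
          ring
        linarith [le_of_eq this]
    calc (∑ i, (x i * |x i| ^ (α - 2)) * u i) ^ 2
        = (∑ i, |x i| ^ (α / 2) * (x i * |x i| ^ (α / 2 - 2) * u i)) ^ 2 := by
          congr 1; exact Finset.sum_congr rfl fun i _ => (h1 i).symm
      _ ≤ (∑ i, (|x i| ^ (α / 2)) ^ 2) * ∑ i, (x i * |x i| ^ (α / 2 - 2) * u i) ^ 2 := CS
      _ ≤ (∑ i, |x i| ^ α) * ∑ i, |x i| ^ (α - 2) * u i * u i := by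
          apply mul_le_mul
          · exact le_of_eq (Finset.sum_congr rfl fun i _ => h2 i)
          · exact Finset.sum_le_sum fun i _ => h3 i
          · positivity
          · positivity
      _ = (∑ i, |x i| ^ (α - 2) * u i * u i) * ∑ i, |x i| ^ α := mul_comm _ _
  calc (∑ i, (x i * |x i| ^ (α - 2)) * u i) * (∑ i, (x i * |x i| ^ (α - 2)) * u i)
      = (∑ i, (x i * |x i| ^ (α - 2)) * u i) ^ 2 := (sq _).symm
    _ ≤ _ := key

lemma Sform_self_le (hα : 2 ≤ α) {x : Fin m → ℝ} (hx : x ≠ 0) (u : Fin m → ℝ) :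
    Sform α x u u ≤ (∑ i, |x i| ^ α) ^ ((α - 2)/α) * ∑ i, u i ^ 2 := by
  have hk := ksum_pos hα hx
  have h1 : Sform α x u u ≤ ∑ i, |x i| ^ (α - 2) * u i * u i := by
    rw [Sform]
    have : 0 ≤ (∑ i, (x i * |x i| ^ (α - 2)) * u i) * (∑ i, (x i * |x i| ^ (α - 2)) * u i) /
        (∑ i, |x i| ^ α) := by
      apply div_nonneg _ hk.le
      exact mul_self_nonneg _
    linarith
  refine h1.trans ?_
  rw [Finset.mul_sum]
  apply Finset.sum_le_sum
  intro i _
  have hci : |x i| ^ (α - 2) ≤ (∑ j, |x j| ^ α) ^ ((α - 2)/α) := by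
    have hle : |x i| ^ α ≤ ∑ j, |x j| ^ α :=
      Finset.single_le_sum (f := fun j => |x j| ^ α) (fun j _ => by positivity)
        (Finset.mem_univ i)
    have := Real.rpow_le_rpow (by positivity) hle (div_nonneg (by linarith) (by linarith) : (0:ℝ) ≤ (α - 2)/α)
    rwa [← Real.rpow_mul (abs_nonneg _), show α * ((α - 2)/α) = α - 2 by
      field_simp] at this
  calc |x i| ^ (α - 2) * u i * u i = |x i| ^ (α - 2) * (u i * u i) := by ring
    _ ≤ (∑ j, |x j| ^ α) ^ ((α - 2)/α) * (u i * u i) := by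
        apply mul_le_mul_of_nonneg_right hci (mul_self_nonneg _)
    _ = (∑ j, |x j| ^ α) ^ ((α - 2)/α) * u i ^ 2 := by rw [sq]

lemma Sform_symm (x v w : Fin m → ℝ) : Sform α x v w = Sform α x w v := by
  unfold Sform
  congr 1
  · exact Finset.sum_congr rfl fun i _ => by ring
  · rw [mul_comm]

lemma Sform_quad (x v w : Fin m → ℝ) (t : ℝ) :
    Sform α x (fun i => v i + t * w i) (fun i => v i + t * w i) =
      Sform α x w w * (t * t) + 2 * Sform α x v w * t + Sform α x v v := by
  unfold Sform
  have e1 : ∑ i, |x i| ^ (α - 2) * (v i + t * w i) * (v i + t * w i) =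
      (∑ i, |x i| ^ (α - 2) * w i * w i) * (t * t) +
      2 * (∑ i, |x i| ^ (α - 2) * v i * w i) * t +
      ∑ i, |x i| ^ (α - 2) * v i * v i := by
    calc ∑ i, |x i| ^ (α - 2) * (v i + t * w i) * (v i + t * w i)
        = ∑ i, (|x i| ^ (α - 2) * w i * w i * (t * t) +
            (2 * (|x i| ^ (α - 2) * v i * w i) * t + |x i| ^ (α - 2) * v i * v i)) :=
          Finset.sum_congr rfl fun i _ => by ring
      _ = (∑ i, |x i| ^ (α - 2) * w i * w i * (t * t)) +
          ((∑ i, 2 * (|x i| ^ (α - 2) * v i * w i) * t) +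
            ∑ i, |x i| ^ (α - 2) * v i * v i) := by
          rw [Finset.sum_add_distrib, Finset.sum_add_distrib]
      _ = _ := by
          rw [← Finset.sum_mul, ← Finset.sum_mul, ← Finset.mul_sum]
          ring
  have e2 : ∑ i, (x i * |x i| ^ (α - 2)) * (v i + t * w i) =
      (∑ i, (x i * |x i| ^ (α - 2)) * v i) + t * ∑ i, (x i * |x i| ^ (α - 2)) * w i := by
    rw [Finset.mul_sum, ← Finset.sum_add_distrib]
    exact Finset.sum_congr rfl fun i _ => by ring
  rw [e1, e2]
  ring

lemma Sform_sq_le (hα : 2 ≤ α) {x : Fin m → ℝ} (hx : x ≠ 0) (v w : Fin m → ℝ) :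
    Sform α x v w ^ 2 ≤ Sform α x v v * Sform α x w w := by
  have hquad : ∀ t : ℝ, 0 ≤ Sform α x w w * (t * t) + 2 * Sform α x v w * t + Sform α x v v := by
    intro t
    rw [← Sform_quad]
    exact Sform_self_nonneg hα hx _
  have := discrim_le_zero hquad
  rw [discrim] at this
  nlinarith [this]

end algebra

section algebra2
variable {m : ℕ} {α : ℝ}

lemma Sform_one (hα : 2 ≤ α) {x v w : Fin 1 → ℝ} (hx : x ≠ 0) : Sform α x v w = 0 := by
  have hx0 : x 0 ≠ 0 := by
    intro h
    apply hx
    funext i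
    simp [Fin.eq_zero i, h]
  have habs : (0:ℝ) < |x 0| := abs_pos.2 hx0
  unfold Sform
  simp only [Fin.sum_univ_one]
  have hk : |x 0| ^ α ≠ 0 := by positivity
  have key : (x 0 * |x 0| ^ (α - 2)) * (x 0 * |x 0| ^ (α - 2)) = |x 0| ^ (α - 2) * |x 0| ^ α := by
    have : x 0 * x 0 = |x 0| ^ (2:ℝ) := by
      rw [show (2:ℝ) = ((2:ℕ):ℝ) by norm_num, Real.rpow_natCast, sq_abs, sq]
    rw [show (x 0 * |x 0| ^ (α - 2)) * (x 0 * |x 0| ^ (α - 2)) =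
      (x 0 * x 0) * (|x 0| ^ (α - 2) * |x 0| ^ (α - 2)) by ring, this,
      ← Real.rpow_add habs, ← Real.rpow_add habs, ← Real.rpow_add habs]
    ring_nf
  field_simp
  linear_combination (-(v 0 * w 0)) * key

/-- The main quadratic-form bound. -/
lemma Sform_abs_le (hm : 1 ≤ m) (hα : 2 ≤ α) {x : Fin m → ℝ} (hx : x ≠ 0) (v w : Fin m → ℝ) :
    |Sform α x v w| ≤ (if 1 < m then 1 else 0) * (∑ i, |x i| ^ α) ^ ((α - 2)/α) *
      (Real.sqrt (∑ i, v i ^ 2) * Real.sqrt (∑ i, w i ^ 2)) := by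
  rcases eq_or_lt_of_le hm with h1 | h1
  · -- m = 1
    have hm1 : m = 1 := h1.symm
    subst hm1
    rw [Sform_one hα hx]
    simp
  · rw [if_pos h1, one_mul]
    set M := (∑ i, |x i| ^ α) ^ ((α - 2)/α) with hM
    have hM0 : 0 ≤ M := Real.rpow_nonneg (by positivity) _
    have h2 : Sform α x v w ^ 2 ≤ (M * (Real.sqrt (∑ i, v i ^ 2) * Real.sqrt (∑ i, w i ^ 2))) ^ 2 := by
      have hv := Sform_self_le hα hx v
      have hw := Sform_self_le hα hx w
      have hv0 := Sform_self_nonneg hα hx v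
      have hw0 := Sform_self_nonneg hα hx w
      have := Sform_sq_le hα hx v w
      have hsv : Real.sqrt (∑ i, v i ^ 2) ^ 2 = ∑ i, v i ^ 2 :=
        Real.sq_sqrt (by positivity)
      have hsw : Real.sqrt (∑ i, w i ^ 2) ^ 2 = ∑ i, w i ^ 2 :=
        Real.sq_sqrt (by positivity)
      calc Sform α x v w ^ 2 ≤ Sform α x v v * Sform α x w w := this
        _ ≤ (M * ∑ i, v i ^ 2) * (M * ∑ i, w i ^ 2) := by
            apply mul_le_mul hv hw hw0
            exact mul_nonneg hM0 (by positivity)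
        _ = (M * (Real.sqrt (∑ i, v i ^ 2) * Real.sqrt (∑ i, w i ^ 2))) ^ 2 := by
            rw [mul_pow, mul_pow, hsv, hsw]
            ring
    have hrhs : 0 ≤ M * (Real.sqrt (∑ i, v i ^ 2) * Real.sqrt (∑ i, w i ^ 2)) := by
      apply mul_nonneg hM0
      exact mul_nonneg (Real.sqrt_nonneg _) (Real.sqrt_nonneg _)
    calc |Sform α x v w| = Real.sqrt (Sform α x v w ^ 2) := (Real.sqrt_sq_eq_abs _).symm
      _ ≤ Real.sqrt ((M * (Real.sqrt (∑ i, v i ^ 2) * Real.sqrt (∑ i, w i ^ 2))) ^ 2) :=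
          Real.sqrt_le_sqrt h2
      _ = _ := Real.sqrt_sq hrhs

end algebra2



section calc1
variable {m : ℕ} (α : ℝ)

noncomputable def hsum (x : EuclideanSpace ℝ (Fin m)) : ℝ := ∑ i, |x i| ^ α

noncomputable def PhiV (x : EuclideanSpace ℝ (Fin m)) : EuclideanSpace ℝ (Fin m) :=
  WithLp.toLp 2 (fun j => x j * |x j| ^ (α - 2))

noncomputable def Dh (x : EuclideanSpace ℝ (Fin m)) : EuclideanSpace ℝ (Fin m) →L[ℝ] ℝ :=
  ∑ i, (α * (x i * |x i| ^ (α - 2))) •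
    (EuclideanSpace.proj i : EuclideanSpace ℝ (Fin m) →L[ℝ] ℝ)

noncomputable def DPhi (x : EuclideanSpace ℝ (Fin m)) :
    EuclideanSpace ℝ (Fin m) →L[ℝ] EuclideanSpace ℝ (Fin m) :=
  ((PiLp.continuousLinearEquiv 2 ℝ (fun _ : Fin m => ℝ)).symm.toContinuousLinearMap).comp
    (ContinuousLinearMap.pi (fun j => ((α - 1) * |x j| ^ (α - 2)) •
      (EuclideanSpace.proj j : EuclideanSpace ℝ (Fin m) →L[ℝ] ℝ)))

variable {α}

lemma hasFDerivAt_proj (i : Fin m) (x : EuclideanSpace ℝ (Fin m)) :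
    HasFDerivAt (fun y : EuclideanSpace ℝ (Fin m) => y i)
      (EuclideanSpace.proj i : EuclideanSpace ℝ (Fin m) →L[ℝ] ℝ) x :=
  (EuclideanSpace.proj (𝕜 := ℝ) i).hasFDerivAt

lemma Dh_apply (x v : EuclideanSpace ℝ (Fin m)) :
    Dh α x v = ∑ i, α * (x i * |x i| ^ (α - 2)) * v i := by
  simp [Dh, ContinuousLinearMap.sum_apply]

lemma DPhi_apply (x v : EuclideanSpace ℝ (Fin m)) (j : Fin m) :
    DPhi α x v j = (α - 1) * |x j| ^ (α - 2) * v j := by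
  simp [DPhi]

lemma hasFDerivAt_hsum (hα : 2 ≤ α) (x : EuclideanSpace ℝ (Fin m)) :
    HasFDerivAt (hsum α) (Dh α x) x := by
  unfold hsum Dh
  apply HasFDerivAt.fun_sum
  intro i _
  exact (psi_hasDerivAt hα (x i)).comp_hasFDerivAt x (hasFDerivAt_proj i x)

lemma hasFDerivAt_PhiV (hα : 2 ≤ α) (x : EuclideanSpace ℝ (Fin m)) :
    HasFDerivAt (PhiV α) (DPhi α x) x := by
  unfold PhiV DPhi
  apply HasFDerivAt.comp (g := (PiLp.continuousLinearEquiv 2 ℝ (fun _ : Fin m => ℝ)).symm)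
  · exact ((PiLp.continuousLinearEquiv 2 ℝ (fun _ : Fin m => ℝ)).symm.toContinuousLinearMap).hasFDerivAt
  · exact hasFDerivAt_pi.2 fun j => by
      have := (phi_hasDerivAt hα (x j)).comp_hasFDerivAt x (hasFDerivAt_proj j x)
      exact this


variable (α)

noncomputable def Gfun (x : EuclideanSpace ℝ (Fin m)) : EuclideanSpace ℝ (Fin m) :=
  (hsum α x ^ ((1 - α)/α)) • PhiV α x

noncomputable def DG (x : EuclideanSpace ℝ (Fin m)) :
    EuclideanSpace ℝ (Fin m) →L[ℝ] EuclideanSpace ℝ (Fin m) :=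
  (hsum α x ^ ((1 - α)/α)) • DPhi α x +
    (((1 - α)/α * hsum α x ^ ((1 - α)/α - 1)) • Dh α x).smulRight (PhiV α x)

variable {α}

lemma hsum_pos (hα : 2 ≤ α) {x : EuclideanSpace ℝ (Fin m)} (hx : x ≠ 0) : 0 < hsum α x := by
  apply ksum_pos hα
  intro h
  apply hx
  ext i
  have := congrFun h i
  simpa using this

lemma hasFDerivAt_Gfun (hα : 2 ≤ α) {x : EuclideanSpace ℝ (Fin m)} (hx : x ≠ 0) :
    HasFDerivAt (Gfun α) (DG α x) x := by
  have hpos := hsum_pos hα hx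
  have hc : HasFDerivAt (fun y => hsum α y ^ ((1 - α)/α))
      (((1 - α)/α * hsum α x ^ ((1 - α)/α - 1)) • Dh α x) x := by
    have := (Real.hasDerivAt_rpow_const (x := hsum α x) (p := (1 - α)/α)
      (Or.inl hpos.ne')).comp_hasFDerivAt x (hasFDerivAt_hsum hα x)
    exact this
  exact hc.smul (hasFDerivAt_PhiV hα x)

lemma hasGradientAt_lpE (hα : 2 ≤ α) {x : EuclideanSpace ℝ (Fin m)} (hx : x ≠ 0) :
    HasGradientAt (lpE α) (Gfun α x) x := by
  have hpos := hsum_pos hα hx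
  have hα0 : α ≠ 0 := by linarith
  rw [hasGradientAt_iff_hasFDerivAt]
  have h1 : HasFDerivAt (fun y => hsum α y ^ (1/α))
      ((1/α * hsum α x ^ (1/α - 1)) • Dh α x) x :=
    (Real.hasDerivAt_rpow_const (x := hsum α x) (p := 1/α)
      (Or.inl hpos.ne')).comp_hasFDerivAt x (hasFDerivAt_hsum hα x)
  have heq : (fun y => hsum α y ^ (1/α)) = lpE (m := m) α := rfl
  rw [heq] at h1
  refine h1.congr_fderiv ?_
  symm
  ext v
  rw [InnerProductSpace.toDual_apply_apply, PiLp.inner_apply]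
  simp only [RCLike.inner_apply, conj_trivial]
  rw [ContinuousLinearMap.smul_apply, Dh_apply, smul_eq_mul, Finset.mul_sum]
  apply Finset.sum_congr rfl
  intro i _
  rw [Gfun, PiLp.smul_apply, PhiV, smul_eq_mul]
  have : (1:ℝ)/α - 1 = (1 - α)/α := by field_simp
  rw [← this]
  field_simp

lemma DG_component (x v : EuclideanSpace ℝ (Fin m)) (j : Fin m) :
    DG α x v j = hsum α x ^ ((1 - α)/α) * ((α - 1) * |x j| ^ (α - 2) * v j) +
      ((1 - α)/α * hsum α x ^ ((1 - α)/α - 1) * Dh α x v) * (x j * |x j| ^ (α - 2)) := by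
  simp [DG, ContinuousLinearMap.add_apply, ContinuousLinearMap.smul_apply,
    ContinuousLinearMap.smulRight_apply, PiLp.add_apply, PiLp.smul_apply, DPhi_apply, PhiV,
    smul_eq_mul]

lemma DG_inner (hα : 2 ≤ α) {x : EuclideanSpace ℝ (Fin m)} (hx : x ≠ 0)
    (v w : EuclideanSpace ℝ (Fin m)) :
    inner ℝ (DG α x v) w = (α - 1) * hsum α x ^ ((1 - α)/α) * Sform α x v w := by
  have hpos := hsum_pos hα hx
  have hα0 : α ≠ 0 := by linarith
  have hkne : hsum α x ≠ 0 := hpos.ne'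
  have step1 : (inner ℝ (DG α x v) w : ℝ) =
      (hsum α x ^ ((1 - α)/α) * (α - 1)) * (∑ j, |x j| ^ (α - 2) * v j * w j) +
      ((1 - α)/α * hsum α x ^ ((1 - α)/α - 1) * Dh α x v) *
        (∑ j, (x j * |x j| ^ (α - 2)) * w j) := by
    rw [real_inner_comm, PiLp.inner_apply]
    simp only [RCLike.inner_apply, conj_trivial]
    rw [Finset.mul_sum, Finset.mul_sum, ← Finset.sum_add_distrib]
    apply Finset.sum_congr rfl
    intro j _
    rw [DG_component]
    ring
  rw [step1, Dh_apply, Sform]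
  have hd : ∑ i, α * (x i * |x i| ^ (α - 2)) * v i =
      α * ∑ i, (x i * |x i| ^ (α - 2)) * v i := by
    rw [Finset.mul_sum]
    exact Finset.sum_congr rfl fun i _ => by ring
  have hq1 : hsum α x ^ ((1 - α)/α - 1) = hsum α x ^ ((1 - α)/α) / hsum α x := by
    rw [Real.rpow_sub hpos, Real.rpow_one]
  have hk : (∑ i, |x i| ^ α) = hsum α x := rfl
  rw [hd, hq1, hk]
  generalize hsum α x ^ ((1 - α)/α) = Q
  generalize hsum α x = k at hkne ⊢
  generalize (∑ j, |x j| ^ (α - 2) * v j * w j) = S1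
  generalize (∑ i, (x i * |x i| ^ (α - 2)) * v i) = Sv
  generalize (∑ j, (x j * |x j| ^ (α - 2)) * w j) = Sw
  field_simp
  ring

lemma esnorm (v : EuclideanSpace ℝ (Fin m)) : Real.sqrt (∑ i, v i ^ 2) = ‖v‖ := by
  rw [EuclideanSpace.norm_eq]
  congr 1
  exact Finset.sum_congr rfl fun i _ => by rw [Real.norm_eq_abs, sq_abs]

lemma nonzero_fun {x : EuclideanSpace ℝ (Fin m)} (hx : x ≠ 0) : (x : Fin m → ℝ) ≠ 0 := by
  intro h
  apply hx
  ext i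
  have := congrFun h i
  simpa using this

lemma DG_opNorm (hm : 1 ≤ m) (hα : 2 ≤ α) {x : EuclideanSpace ℝ (Fin m)} (hx : x ≠ 0) :
    ‖DG α x‖ ≤ (α - 1) * (if 1 < m then 1 else 0) / lpE α x := by
  have hpos := hsum_pos hα hx
  have hα0 : α ≠ 0 := by linarith
  have hα1 : (0:ℝ) ≤ α - 1 := by linarith
  have hind : (0:ℝ) ≤ (if 1 < m then 1 else 0) := by positivity
  set C₀ := (α - 1) * (if 1 < m then (1:ℝ) else 0) * hsum α x ^ (-(1/α)) with hC₀
  have hC₀0 : 0 ≤ C₀ := by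
    apply mul_nonneg (mul_nonneg hα1 hind)
    exact (Real.rpow_pos_of_pos hpos _).le
  have key : ∀ v w : EuclideanSpace ℝ (Fin m), |(inner ℝ (DG α x v) w : ℝ)| ≤ C₀ * ‖v‖ * ‖w‖ := by
    intro v w
    rw [DG_inner hα hx v w]
    have hS := Sform_abs_le hm hα (nonzero_fun hx) v w
    rw [Sform] at hS
    rw [Sform]
    have hk : (∑ i, |x i| ^ α) = hsum α x := rfl
    rw [hk] at hS ⊢
    rw [abs_mul, abs_of_nonneg (mul_nonneg hα1 (Real.rpow_pos_of_pos hpos _).le)]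
    calc (α - 1) * hsum α x ^ ((1 - α)/α) * |_root_.id ((∑ i, |x i| ^ (α - 2) * v i * w i) -
          (∑ i, (x i * |x i| ^ (α - 2)) * v i) * (∑ i, (x i * |x i| ^ (α - 2)) * w i) /
          hsum α x)|
        ≤ (α - 1) * hsum α x ^ ((1 - α)/α) *
          ((if 1 < m then 1 else 0) * hsum α x ^ ((α - 2)/α) *
            (Real.sqrt (∑ i, v i ^ 2) * Real.sqrt (∑ i, w i ^ 2))) := by
          apply mul_le_mul_of_nonneg_left _ (mul_nonneg hα1 (Real.rpow_pos_of_pos hpos _).le)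
          exact hS
      _ = C₀ * ‖v‖ * ‖w‖ := by
          rw [esnorm, esnorm, hC₀]
          have hmul : hsum α x ^ ((1 - α)/α) * hsum α x ^ ((α - 2)/α) =
              hsum α x ^ (-(1/α)) := by
            rw [← Real.rpow_add hpos]
            congr 1
            field_simp
            ring
          rw [← hmul]
          ring
  have hvb : ∀ v : EuclideanSpace ℝ (Fin m), ‖DG α x v‖ ≤ C₀ * ‖v‖ := by
    intro v
    have h2 := key v (DG α x v)
    rw [real_inner_self_eq_norm_mul_norm, abs_of_nonneg (mul_nonneg (norm_nonneg _)
      (norm_nonneg _))] at h2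
    rcases eq_or_lt_of_le (norm_nonneg (DG α x v)) with h0 | h0
    · rw [← h0]
      exact mul_nonneg hC₀0 (norm_nonneg _)
    · exact le_of_mul_le_mul_right (by linarith [h2]) h0
  have hred : C₀ = (α - 1) * (if 1 < m then 1 else 0) / lpE α x := by
    rw [hC₀, lpE, Real.rpow_neg hpos.le]
    rfl
  rw [← hred]
  exact ContinuousLinearMap.opNorm_le_bound _ hC₀0 hvb

end calc1

end helpers

/-- Mean value bound for the difference of gradients of the ℓ_α norm: if the segment
from b to a avoids 0 and f = ‖·‖_α is twice differentiable along it, then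
‖∇f(a) − ∇f(b)‖₂ ≤ (α−1)·1{m>1}·‖a−b‖₂ / min_{c∈[0,1]} ‖b + c(a−b)‖_α. -/
theorem lp_gradient_mean_value_bound {m : ℕ} (hm : 1 ≤ m) (α : ℝ) (hα : 2 ≤ α)
    (f : EuclideanSpace ℝ (Fin m) → ℝ) (hf : ∀ x, f x = lpE α x)
    (a b : EuclideanSpace ℝ (Fin m))
    (hseg : ∀ c ∈ Set.Icc (0 : ℝ) 1, b + c • (a - b) ≠ 0)
    (hdiff : ∀ c ∈ Set.Icc (0 : ℝ) 1, ContDiffAt ℝ 2 f (b + c • (a - b))) :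
    ‖gradient f a - gradient f b‖ ≤
      (α - 1) * (if 1 < m then 1 else 0) * ‖a - b‖ /
        sInf {t : ℝ | ∃ c ∈ Set.Icc (0 : ℝ) 1, t = lpE α (b + c • (a - b))} := by

  classical
  have hα1 : (0:ℝ) ≤ α - 1 := by linarith
  have hind : (0:ℝ) ≤ (if 1 < m then 1 else 0) := by positivity
  have hfg : f = lpE α := funext hf
  set S := segment ℝ b a with hS
  have hSeq : S = (fun c : ℝ => b + c • (a - b)) '' Set.Icc 0 1 := segment_eq_image' ℝ b a
  have hS0 : ∀ x ∈ S, x ≠ 0 := by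
    intro x hx
    rw [hSeq] at hx
    obtain ⟨c, hc, rfl⟩ := hx
    exact hseg c hc
  set N := {t : ℝ | ∃ c ∈ Set.Icc (0 : ℝ) 1, t = lpE α (b + c • (a - b))} with hN
  -- positivity of lpE on the segment
  have hlpos : ∀ c ∈ Set.Icc (0:ℝ) 1, 0 < lpE α (b + c • (a - b)) := by
    intro c hc
    have hxne := hseg c hc
    have hsumpos : 0 < ∑ i, |(b + c • (a - b)) i| ^ α := by
      obtain ⟨i, hi⟩ : ∃ i, (b + c • (a - b)) i ≠ 0 := by
        by_contra h
        push_neg at h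
        exact hxne (by ext i; simpa using h i)
      refine Finset.sum_pos' (fun j _ => by positivity) ⟨i, Finset.mem_univ i, ?_⟩
      have : 0 < |(b + c • (a - b)) i| := abs_pos.2 hi
      positivity
    exact Real.rpow_pos_of_pos hsumpos _
  -- continuity of lpE along the segment
  have hcont : Continuous fun c : ℝ => lpE α (b + c • (a - b)) := by
    unfold lpE
    apply Continuous.rpow_const
    · apply continuous_finset_sum
      intro i _
      apply Continuous.rpow_const
      · apply Continuous.abs
        have : Continuous fun c : ℝ => b + c • (a - b) :=
          continuous_const.add (continuous_id.smul continuous_const)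
        exact ((EuclideanSpace.proj i :
          EuclideanSpace ℝ (Fin m) →L[ℝ] ℝ).continuous).comp this
      · intro c
        right
        linarith
    · intro c
      right
      positivity
  obtain ⟨c₀, hc₀, hmin⟩ := isCompact_Icc.exists_isMinOn (⟨0, by norm_num⟩ :
    (Set.Icc (0:ℝ) 1).Nonempty) hcont.continuousOn
  have hNne : N.Nonempty := ⟨lpE α (b + (0:ℝ) • (a - b)), 0, by norm_num, rfl⟩
  have hNlb : ∀ t ∈ N, lpE α (b + c₀ • (a - b)) ≤ t := by
    rintro t ⟨c, hc, rfl⟩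
    exact hmin hc
  have hsInfpos : 0 < sInf N := lt_of_lt_of_le (hlpos c₀ hc₀) (le_csInf hNne hNlb)
  have hbdd : BddBelow N := ⟨0, fun t ht => by
    obtain ⟨c, hc, rfl⟩ := ht
    exact (hlpos c hc).le⟩
  have hsInf_le : ∀ c ∈ Set.Icc (0:ℝ) 1, sInf N ≤ lpE α (b + c • (a - b)) := by
    intro c hc
    exact csInf_le hbdd ⟨c, hc, rfl⟩
  set C := (α - 1) * (if 1 < m then 1 else 0) / sInf N with hC
  have hbound : ∀ x ∈ S, ‖DG α x‖ ≤ C := by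
    intro x hx
    refine (DG_opNorm hm hα (hS0 x hx)).trans ?_
    rw [hC]
    have hxle : sInf N ≤ lpE α x := by
      rw [hSeq] at hx
      obtain ⟨c, hc, rfl⟩ := hx
      exact hsInf_le c hc
    exact div_le_div_of_nonneg_left (mul_nonneg hα1 hind) hsInfpos hxle
  have hder : ∀ x ∈ S, HasFDerivWithinAt (Gfun α) (DG α x) S x := fun x hx =>
    (hasFDerivAt_Gfun hα (hS0 x hx)).hasFDerivWithinAt
  have hmvt := (convex_segment b a).norm_image_sub_le_of_norm_hasFDerivWithin_le
    hder hbound (left_mem_segment ℝ b a) (right_mem_segment ℝ b a)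
  -- identify gradients
  have ha0 : a ≠ 0 := by
    have := hseg 1 (by norm_num)
    simpa using this
  have hb0 : b ≠ 0 := by
    have := hseg 0 (by norm_num)
    simpa using this
  have hga : gradient f a = Gfun α a := by
    rw [hfg]
    exact (hasGradientAt_lpE hα ha0).gradient
  have hgb : gradient f b = Gfun α b := by
    rw [hfg]
    exact (hasGradientAt_lpE hα hb0).gradient
  rw [hga, hgb]
  calc ‖Gfun α a - Gfun α b‖ ≤ C * ‖a - b‖ := hmvt
    _ = (α - 1) * (if 1 < m then 1 else 0) * ‖a - b‖ / sInf N := by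
        rw [hC, div_mul_eq_mul_div]
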